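/- Let Ω ⊂ ℝⁿ (n ≥ 2) be a bounded convex domain, let q ∈ [0, n), let a₁,…,a_{n−1} ≥ 1, set ā = Σ_{i=1}^{n−1} 2/a_i, and assume n − ā − 2 > 0. Let x₀ ∈ ∂Ω and suppose Ω satisfies the (a₁,…,a_{n−1})-exterior convex condition at x₀ with constants η₁,…,η_{n−1}. If u ∈ C(Ω̄) is an Aleksandrov super-solution of the Dirichlet problem det D²u = |u|^q in Ω, u = 0 on ∂Ω, then |u(x)| ≤ C·d_x^λ for every x ∈ Ω with d_x = |x − x₀|, where λ = (ā + 2)/n and C > 0 depends only on n, q, diam Ω, λ and a₁,…,a_{n−1}, η₁,…,η_{n−1}. -/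

import Mathlib

open MeasureTheory Metric Set
open scoped RealInnerProductSpace ENNReal

noncomputable section

/-- Index of the last coordinate of `ℝⁿ`. -/
def lastIdx (n : ℕ) (hn : 2 ≤ n) : Fin n := ⟨n - 1, by omega⟩

/-- Embedding of the first `n - 1` coordinate indices into `Fin n`. -/
def coordIdx (n : ℕ) (i : Fin (n - 1)) : Fin n := Fin.castLE (Nat.sub_le n 1) i

/-- `ā = ∑ᵢ 2 / aᵢ`. -/
def abar (n : ℕ) (a : Fin (n - 1) → ℝ) : ℝ := ∑ i, 2 / a i

/-- `θ = (ā + 2 + k) / (2n + 2k + 2)`. -/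
def thetaVal (n : ℕ) (k : ℝ) (a : Fin (n - 1) → ℝ) : ℝ :=
  (abar n a + 2 + k) / (2 * n + 2 * k + 2)

/-- The model exterior region `{x : xₙ > ∑ ηᵢ |xᵢ|^{aᵢ}}`. -/
def extSet (n : ℕ) (hn : 2 ≤ n) (a η : Fin (n - 1) → ℝ) : Set (EuclideanSpace ℝ (Fin n)) :=
  {x | (∑ i, η i * |x (coordIdx n i)| ^ a i) < x (lastIdx n hn)}

/-- The model interior region `{x : ∑ ηᵢ |xᵢ|^{aᵢ} < xₙ < h}`. -/
def intSet (n : ℕ) (hn : 2 ≤ n) (a η : Fin (n - 1) → ℝ) (h : ℝ) :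
    Set (EuclideanSpace ℝ (Fin n)) :=
  {x | (∑ i, η i * |x (coordIdx n i)| ^ a i) < x (lastIdx n hn) ∧ x (lastIdx n hn) < h}

/-- `Ω` satisfies the `(a₁, …, a_{n-1})`-exterior convex condition at `x₀` with constants `η`. -/
def ExtCondAt (n : ℕ) (hn : 2 ≤ n) (a η : Fin (n - 1) → ℝ)
    (Ω : Set (EuclideanSpace ℝ (Fin n))) (x₀ : EuclideanSpace ℝ (Fin n)) : Prop :=
  ∃ T : EuclideanSpace ℝ (Fin n) ≃ᵃⁱ[ℝ] EuclideanSpace ℝ (Fin n),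
    T x₀ = 0 ∧ T '' Ω ⊆ extSet n hn a η

/-- `Ω` satisfies the `(a₁, …, a_{n-1})`-interior convex condition at `x₀`
with constants `η, h`. -/
def IntCondAt (n : ℕ) (hn : 2 ≤ n) (a η : Fin (n - 1) → ℝ) (h : ℝ)
    (Ω : Set (EuclideanSpace ℝ (Fin n))) (x₀ : EuclideanSpace ℝ (Fin n)) : Prop :=
  ∃ T : EuclideanSpace ℝ (Fin n) ≃ᵃⁱ[ℝ] EuclideanSpace ℝ (Fin n),
    T x₀ = 0 ∧ intSet n hn a η h ⊆ T '' Ω ∧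
      T '' Ω ⊆ {x | 0 < x (lastIdx n hn)}

/-- The Hessian determinant `det D²f(x)`. -/
def hessDet (n : ℕ) (f : EuclideanSpace ℝ (Fin n) → ℝ) (x : EuclideanSpace ℝ (Fin n)) : ℝ :=
  (Matrix.of fun i j : Fin n =>
    iteratedFDeriv ℝ 2 f x ![EuclideanSpace.single i 1, EuclideanSpace.single j 1]).det

/-- Convex viscosity super-solution of `det D²u = |u|^{-n-k-2} (x·Du - u)^{-k}` in `Ω`. -/
def IsViscSuper (n : ℕ) (k : ℝ) (Ω : Set (EuclideanSpace ℝ (Fin n)))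
    (u : EuclideanSpace ℝ (Fin n) → ℝ) : Prop :=
  ∀ φ : EuclideanSpace ℝ (Fin n) → ℝ, ContDiffOn ℝ 2 φ Ω → ConvexOn ℝ Ω φ →
    ∀ x₀ ∈ Ω, (∀ᶠ x in nhds x₀, u x₀ - φ x₀ ≤ u x - φ x) →
      hessDet n φ x₀ ≤
        |u x₀| ^ (-(n : ℝ) - k - 2) * (⟪x₀, gradient φ x₀⟫ - u x₀) ^ (-k)

/-- Convex viscosity sub-solution of `det D²u = |u|^{-n-k-2} (x·Du - u)^{-k}` in `Ω`. -/
def IsViscSub (n : ℕ) (k : ℝ) (Ω : Set (EuclideanSpace ℝ (Fin n)))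
    (u : EuclideanSpace ℝ (Fin n) → ℝ) : Prop :=
  ∀ φ : EuclideanSpace ℝ (Fin n) → ℝ, ContDiffOn ℝ 2 φ Ω → ConvexOn ℝ Ω φ →
    ∀ x₀ ∈ Ω, (∀ᶠ x in nhds x₀, u x - φ x ≤ u x₀ - φ x₀) →
      |u x₀| ^ (-(n : ℝ) - k - 2) * (⟪x₀, gradient φ x₀⟫ - u x₀) ^ (-k) ≤ hessDet n φ x₀

/-- The subdifferential `∂u(x)` of a convex function on `Ω`. -/
def subdiff (n : ℕ) (Ω : Set (EuclideanSpace ℝ (Fin n)))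
    (u : EuclideanSpace ℝ (Fin n) → ℝ) (x : EuclideanSpace ℝ (Fin n)) :
    Set (EuclideanSpace ℝ (Fin n)) :=
  {p | ∀ y ∈ Ω, u x + ⟪p, y - x⟫ ≤ u y}

/-- The Monge–Ampère measure `Mu(E) = |∂u(E)|`. -/
def maMeasure (n : ℕ) (Ω : Set (EuclideanSpace ℝ (Fin n)))
    (u : EuclideanSpace ℝ (Fin n) → ℝ) (E : Set (EuclideanSpace ℝ (Fin n))) : ℝ≥0∞ :=
  volume (⋃ x ∈ E, subdiff n Ω u x)

/-- Aleksandrov super-solution of `det D²u = |u|^q` in `Ω`. -/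
def IsAlekSuper (n : ℕ) (q : ℝ) (Ω : Set (EuclideanSpace ℝ (Fin n)))
    (u : EuclideanSpace ℝ (Fin n) → ℝ) : Prop :=
  ∀ E ⊆ Ω, MeasurableSet E →
    maMeasure n Ω u E ≤ ∫⁻ x in E, ENNReal.ofReal (|u x| ^ q)

/-- Aleksandrov solution of `det D²u = |u|^q` in `Ω`. -/
def IsAlekSol (n : ℕ) (q : ℝ) (Ω : Set (EuclideanSpace ℝ (Fin n)))
    (u : EuclideanSpace ℝ (Fin n) → ℝ) : Prop :=
  ∀ E ⊆ Ω, MeasurableSet E →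
    maMeasure n Ω u E = ∫⁻ x in E, ENNReal.ofReal (|u x| ^ q)

/-- The barrier `W(x) = -∑ᵢ [(xₙ/ε)^{2/aᵢ} - xᵢ²]^{aᵢθ/2}`. -/
def Wfun (n : ℕ) (hn : 2 ≤ n) (a : Fin (n - 1) → ℝ) (θ ε : ℝ)
    (x : EuclideanSpace ℝ (Fin n)) : ℝ :=
  -∑ i, ((x (lastIdx n hn) / ε) ^ (2 / a i) - x (coordIdx n i) ^ 2) ^ (a i * θ / 2)

/-- The open ellipsoid `E`. -/
def ellip (n : ℕ) (hn : 2 ≤ n) (a : Fin (n - 1) → ℝ) (c η ht : ℝ) :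
    Set (EuclideanSpace ℝ (Fin n)) :=
  {x | (∑ i, x (coordIdx n i) ^ 2 / (c * (ht / η) ^ (1 / a i)) ^ 2)
      + (x (lastIdx n hn) - 3 / 4 * ht) ^ 2 / (c * ht) ^ 2 < 1}

/-- The affine change of variables `z ↦ x`. -/
def chg (n : ℕ) (a : Fin (n - 1) → ℝ) (c η ht : ℝ)
    (z : EuclideanSpace ℝ (Fin n)) : EuclideanSpace ℝ (Fin n) :=
  (EuclideanSpace.equiv (Fin n) ℝ).symm fun j =>
    if hj : (j : ℕ) < n - 1 then c * (ht / η) ^ (1 / a ⟨j.1, hj⟩) * z j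
    else c * ht * z j + 3 / 4 * ht

/-- The point `(0, …, 0, t)` on the `xₙ`-axis. -/
def axisPt (n : ℕ) (t : ℝ) : EuclideanSpace ℝ (Fin n) :=
  (EuclideanSpace.equiv (Fin n) ℝ).symm fun j => if (j : ℕ) = n - 1 then t else 0

/-- inner product expansion in rotated coordinates -/
lemma inner_expand {n : ℕ} (L : EuclideanSpace ℝ (Fin n) ≃ₗᵢ[ℝ] EuclideanSpace ℝ (Fin n))
    (p w : EuclideanSpace ℝ (Fin n)) : ⟪p, w⟫ = ∑ j, (L p) j * (L w) j := by
  rw [← L.inner_map_map p w, PiLp.inner_apply]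
  refine Finset.sum_congr rfl fun j _ => ?_; simp [mul_comm]

lemma sum_bound {n : ℕ} (hn : 2 ≤ n) {m : ℝ} {R : Fin n → ℝ} (hR : ∀ j, 0 < R j)
    {P W : Fin n → ℝ} (hP : ∀ j, |P j| < m / (n * R j)) (hW : ∀ j, |W j| ≤ R j) :
    |∑ j, P j * W j| < m := by
  have hne : (Finset.univ : Finset (Fin n)).Nonempty := by
    haveI : NeZero n := ⟨by omega⟩
    exact Finset.univ_nonempty
  calc |∑ j, P j * W j| ≤ ∑ j, |P j * W j| := Finset.abs_sum_le_sum_abs _ _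
    _ < ∑ _j : Fin n, m / n := by
        refine Finset.sum_lt_sum_of_nonempty hne fun j _ => ?_
        rw [abs_mul]
        have h1 : |P j| * |W j| ≤ |P j| * R j :=
          mul_le_mul_of_nonneg_left (hW j) (abs_nonneg _)
        have h2 : |P j| * R j < (m / (n * R j)) * R j :=
          mul_lt_mul_of_pos_right (hP j) (hR j)
        have hn' : (n:ℝ) ≠ 0 := by positivity
        have hR' : R j ≠ 0 := (hR j).ne'
        have h3 : (m / (n * R j)) * R j = m / n := by
          field_simp
        linarith
    _ = m := by
        have hn' : (n:ℝ) ≠ 0 := by positivity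
        rw [Finset.sum_const, Finset.card_univ, Fintype.card_fin, nsmul_eq_mul]
        field_simp

/-- Core lemma: a box of slopes lies in the subdifferential image of A. -/
lemma boxSub {n : ℕ} (hn : 2 ≤ n)
    {Ω A : Set (EuclideanSpace ℝ (Fin n))}
    {v : EuclideanSpace ℝ (Fin n) → ℝ}
    (hΩo : IsOpen Ω) (hΩb : Bornology.IsBounded Ω)
    (hAo : IsOpen A) (hAΩ : A ⊆ Ω)
    (hvconv : ConvexOn ℝ Ω v) (hvcont : ContinuousOn v (closure A))
    (hbd : ∀ y ∈ closure A \ A, 0 ≤ v y)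
    (L : EuclideanSpace ℝ (Fin n) ≃ₗᵢ[ℝ] EuclideanSpace ℝ (Fin n))
    {z₀ : EuclideanSpace ℝ (Fin n)} (hz₀ : z₀ ∈ A)
    {m : ℝ} (hm : 0 < m) (hmz : v z₀ = -m)
    {R : Fin n → ℝ} (hR : ∀ j, 0 < R j)
    (hwidth : ∀ y ∈ A, ∀ j, |(L (y - z₀)) j| ≤ R j)
    (p : EuclideanSpace ℝ (Fin n)) (hp : ∀ j, |(L p) j| < m / (n * R j)) :
    ∃ z ∈ A, p ∈ subdiff n Ω v z := by
  -- widths extend to the closure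
  have hwidth' : ∀ y ∈ closure A, ∀ j, |(L (y - z₀)) j| ≤ R j := by
    intro y hy j
    have hcl : closure A ⊆ {w | |(L (w - z₀)) j| ≤ R j} := by
      refine closure_minimal (fun w hw => hwidth w hw j) ?_
      have hcont : Continuous fun w : EuclideanSpace ℝ (Fin n) => |(L (w - z₀)) j| := by
        exact ((EuclideanSpace.proj j).continuous.comp
          (L.continuous.comp (continuous_id.sub continuous_const))).abs
      exact isClosed_le hcont continuous_const
    exact hcl hy
  -- small inner product bound
  have hsmall : ∀ w : EuclideanSpace ℝ (Fin n), (∀ j, |(L w) j| ≤ R j) → |⟪p, w⟫| < m := by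
    intro w hw
    rw [inner_expand L]
    exact sum_bound hn hR hp hw
  -- compactness
  have hAb : Bornology.IsBounded A := hΩb.subset hAΩ
  have hcomp : IsCompact (closure A) :=
    Metric.isCompact_of_isClosed_isBounded isClosed_closure hAb.closure
  have hgc : ContinuousOn (fun y => v y - ⟪p, y⟫) (closure A) :=
    hvcont.sub (Continuous.continuousOn (continuous_const.inner continuous_id))
  obtain ⟨z, hzcl, hzmin⟩ := hcomp.exists_isMinOn ⟨z₀, subset_closure hz₀⟩ hgc
  have hmin : ∀ w ∈ closure A, v z + ⟪p, w - z⟫ ≤ v w := by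
    intro w hw
    have h : v z - ⟪p, z⟫ ≤ v w - ⟪p, w⟫ := hzmin hw
    have h2 : ⟪p, w - z⟫ = ⟪p, w⟫ - ⟪p, z⟫ := inner_sub_right _ _ _
    linarith
  have hzA : z ∈ A := by
    by_contra hzA
    have h0 : 0 ≤ v z := hbd z ⟨hzcl, hzA⟩
    have h1 : v z + ⟪p, z₀ - z⟫ ≤ v z₀ := hmin z₀ (subset_closure hz₀)
    have h2 : |⟪p, z - z₀⟫| < m := hsmall _ (fun j => hwidth' z hzcl j)
    have h3 : ⟪p, z₀ - z⟫ = -⟪p, z - z₀⟫ := by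
      rw [← inner_neg_right]; congr 1; abel
    rw [hmz, h3] at h1
    have h5 := abs_lt.1 h2
    linarith [h5.1, h5.2]
  refine ⟨z, hzA, ?_⟩
  intro y hy
  -- extend subgradient inequality from A to Ω by convexity
  obtain ⟨ε, hε, hball⟩ := Metric.isOpen_iff.1 hAo z hzA
  set t : ℝ := min (ε / (2 * (‖y - z‖ + 1))) (1/2) with ht_def
  have hyz1 : 0 < ‖y - z‖ + 1 := by positivity
  have ht0 : 0 < t := by
    apply lt_min
    · positivity
    · norm_num
  have ht1 : t < 1 := lt_of_le_of_lt (min_le_right _ _) (by norm_num)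
  have hq : z + t • (y - z) ∈ A := by
    apply hball
    rw [Metric.mem_ball, dist_eq_norm]
    have : z + t • (y - z) - z = t • (y - z) := by abel
    rw [this, norm_smul, Real.norm_eq_abs, abs_of_pos ht0]
    have h1 : t ≤ ε / (2 * (‖y - z‖ + 1)) := min_le_left _ _
    calc t * ‖y - z‖ ≤ (ε / (2 * (‖y - z‖ + 1))) * ‖y - z‖ :=
          mul_le_mul_of_nonneg_right h1 (norm_nonneg _)
      _ < ε := by
          rw [div_mul_eq_mul_div, div_lt_iff₀ (by positivity)]
          nlinarith [norm_nonneg (y - z), hε]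
  have hcombo : z + t • (y - z) = (1 - t) • z + t • y := by
    rw [sub_smul, smul_sub, one_smul]; abel
  have hqΩ : z + t • (y - z) ∈ Ω := by
    rw [hcombo]
    exact hvconv.1 (hAΩ hzA) hy (by linarith) (le_of_lt ht0) (by ring)
  have hcv : v (z + t • (y - z)) ≤ (1 - t) * v z + t * v y := by
    rw [hcombo]
    exact hvconv.2 (hAΩ hzA) hy (by linarith) (le_of_lt ht0) (by ring)
  have hlow : v z + t * ⟪p, y - z⟫ ≤ v (z + t • (y - z)) := by
    have := hmin _ (subset_closure hq)
    have harg : (z + t • (y - z)) - z = t • (y - z) := by abel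
    rw [harg, real_inner_smul_right] at this
    exact this
  have : v z + t * ⟪p, y - z⟫ ≤ (1 - t) * v z + t * v y := le_trans hlow hcv
  have hfin : t * (v z + ⟪p, y - z⟫) ≤ t * v y := by nlinarith
  exact le_of_mul_le_mul_left (by linarith [hfin]) ht0

/-- Volume of an open box in rotated coordinates. -/
lemma boxVol {n : ℕ} (L : EuclideanSpace ℝ (Fin n) ≃ₗᵢ[ℝ] EuclideanSpace ℝ (Fin n))
    (c r : Fin n → ℝ) :
    volume {p : EuclideanSpace ℝ (Fin n) | ∀ j, |(L p) j - c j| < r j} =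
      ∏ j, ENNReal.ofReal (2 * r j) := by
  have hset : {p : EuclideanSpace ℝ (Fin n) | ∀ j, |(L p) j - c j| < r j} =
      L ⁻¹' ((MeasurableEquiv.toLp 2 (Fin n → ℝ)).symm ⁻¹'
        (Set.pi Set.univ fun j => Set.Ioo (c j - r j) (c j + r j))) := by
    have hcoord : ∀ (x : EuclideanSpace ℝ (Fin n)) (j : Fin n),
        (MeasurableEquiv.toLp 2 (Fin n → ℝ)).symm x j = x j := fun _ _ => rfl
    ext p
    simp only [Set.mem_setOf_eq, Set.mem_preimage, Set.mem_pi, Set.mem_univ, forall_true_left,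
      Set.mem_Ioo, hcoord, abs_lt]
    constructor
    · intro h j
      exact ⟨by linarith [(h j).1], by linarith [(h j).2]⟩
    · intro h j
      exact ⟨by linarith [(h j).1], by linarith [(h j).2]⟩
  rw [hset]
  have hmeas : MeasurableSet ((MeasurableEquiv.toLp 2 (Fin n → ℝ)).symm ⁻¹'
      (Set.pi Set.univ fun j => Set.Ioo (c j - r j) (c j + r j))) :=
    (MeasurableEquiv.toLp 2 (Fin n → ℝ)).symm.measurable
      (MeasurableSet.univ_pi fun j => measurableSet_Ioo)
  rw [L.measurePreserving.measure_preimage hmeas.nullMeasurableSet]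
  rw [(EuclideanSpace.volume_preserving_symm_measurableEquiv_toLp (Fin n)).measure_preimage
    ((MeasurableSet.univ_pi fun j => measurableSet_Ioo).nullMeasurableSet)]
  rw [volume_pi_pi]
  congr 1
  ext j
  rw [Real.volume_Ioo]
  congr 1
  ring

/-- Volume bound for sets inside a closed box in rotated coordinates. -/
lemma boxVolLe {n : ℕ} (L : EuclideanSpace ℝ (Fin n) ≃ₗᵢ[ℝ] EuclideanSpace ℝ (Fin n))
    (c R : Fin n → ℝ) (B : Set (EuclideanSpace ℝ (Fin n)))
    (hB : B ⊆ {p : EuclideanSpace ℝ (Fin n) | ∀ j, |(L p) j - c j| ≤ R j}) :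
    volume B ≤ ∏ j, ENNReal.ofReal (2 * R j) := by
  refine (measure_mono hB).trans ?_
  have hset : {p : EuclideanSpace ℝ (Fin n) | ∀ j, |(L p) j - c j| ≤ R j} =
      L ⁻¹' ((MeasurableEquiv.toLp 2 (Fin n → ℝ)).symm ⁻¹'
        (Set.pi Set.univ fun j => Set.Icc (c j - R j) (c j + R j))) := by
    have hcoord : ∀ (x : EuclideanSpace ℝ (Fin n)) (j : Fin n),
        (MeasurableEquiv.toLp 2 (Fin n → ℝ)).symm x j = x j := fun _ _ => rfl
    ext p
    simp only [Set.mem_setOf_eq, Set.mem_preimage, Set.mem_pi, Set.mem_univ, forall_true_left,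
      Set.mem_Icc, hcoord, abs_le]
    constructor
    · intro h j
      exact ⟨by linarith [(h j).1], by linarith [(h j).2]⟩
    · intro h j
      exact ⟨by linarith [(h j).1], by linarith [(h j).2]⟩
  rw [hset]
  have hmeas : MeasurableSet ((MeasurableEquiv.toLp 2 (Fin n → ℝ)).symm ⁻¹'
      (Set.pi Set.univ fun j => Set.Icc (c j - R j) (c j + R j))) :=
    (MeasurableEquiv.toLp 2 (Fin n → ℝ)).symm.measurable
      (MeasurableSet.univ_pi fun j => measurableSet_Icc)
  rw [L.measurePreserving.measure_preimage hmeas.nullMeasurableSet]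
  rw [(EuclideanSpace.volume_preserving_symm_measurableEquiv_toLp (Fin n)).measure_preimage
    ((MeasurableSet.univ_pi fun j => measurableSet_Icc).nullMeasurableSet)]
  rw [volume_pi_pi]
  refine le_of_eq ?_
  congr 1
  ext j
  rw [Real.volume_Icc]
  congr 1
  ring

/-- `x ^ (∑ f) = ∏ x ^ f i` for `x > 0`. -/
lemma rpow_sum' {x : ℝ} (hx : 0 < x) {ι : Type*} (s : Finset ι) (f : ι → ℝ) :
    x ^ (∑ i ∈ s, f i) = ∏ i ∈ s, x ^ (f i) := by
  classical
  induction s using Finset.induction_on with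
  | empty => simp
  | insert _ _ hni ih =>
      rw [Finset.sum_insert hni, Finset.prod_insert hni, Real.rpow_add hx, ih]

/-- A convex function vanishing on the boundary is nonpositive. -/
lemma convex_nonpos {n : ℕ} {Ω : Set (EuclideanSpace ℝ (Fin n))}
    {u : EuclideanSpace ℝ (Fin n) → ℝ}
    (hΩo : IsOpen Ω) (hΩb : Bornology.IsBounded Ω)
    (hu_cont : ContinuousOn u (closure Ω)) (hu_conv : ConvexOn ℝ Ω u)
    (hfr : ∀ x ∈ frontier Ω, u x = 0)
    {ζ : EuclideanSpace ℝ (Fin n)} (hζ : ζ ∈ frontier Ω) :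
    ∀ y ∈ Ω, u y ≤ 0 := by
  intro y hy
  have hcomp : IsCompact (closure Ω) :=
    Metric.isCompact_of_isClosed_isBounded isClosed_closure hΩb.closure
  obtain ⟨z, hzcl, hzmax⟩ := hcomp.exists_isMaxOn ⟨y, subset_closure hy⟩ hu_cont
  have hymax : u y ≤ u z := hzmax (subset_closure hy)
  by_contra hpos
  push_neg at hpos
  have huz : 0 < u z := lt_of_lt_of_le hpos hymax
  -- z is interior
  have hclsub : closure Ω ⊆ Ω ∪ frontier Ω := by
    intro t ht
    by_cases htΩ : t ∈ Ω
    · exact Or.inl htΩ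
    · exact Or.inr (by rw [hΩo.frontier_eq]; exact ⟨ht, htΩ⟩)
  have hzΩ : z ∈ Ω := by
    rcases hclsub hzcl with h | h
    · exact h
    · exact absurd (hfr z h) (ne_of_gt huz)
  -- a point beyond z away from ζ
  obtain ⟨ε, hε, hball⟩ := Metric.isOpen_iff.1 hΩo z hzΩ
  set t₀ : ℝ := min (ε / (2 * (‖ζ - z‖ + 1))) (1/2) with ht₀_def
  have ht₀0 : 0 < t₀ := by
    apply lt_min
    · positivity
    · norm_num
  have hyt : z - t₀ • (ζ - z) ∈ Ω := by
    apply hball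
    rw [Metric.mem_ball, dist_eq_norm]
    have : z - t₀ • (ζ - z) - z = -(t₀ • (ζ - z)) := by abel
    rw [this, norm_neg, norm_smul, Real.norm_eq_abs, abs_of_pos ht₀0]
    have h1 : t₀ ≤ ε / (2 * (‖ζ - z‖ + 1)) := min_le_left _ _
    calc t₀ * ‖ζ - z‖ ≤ (ε / (2 * (‖ζ - z‖ + 1))) * ‖ζ - z‖ :=
          mul_le_mul_of_nonneg_right h1 (norm_nonneg _)
      _ < ε := by
          rw [div_mul_eq_mul_div, div_lt_iff₀ (by positivity)]
          nlinarith [norm_nonneg (ζ - z), hε]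
  -- points ζ_s for s ∈ [0,1)
  have hζs : ∀ s : ℝ, 0 ≤ s → s < 1 → z + s • (ζ - z) ∈ Ω := by
    intro s hs0 hs1
    have h := hu_conv.1.combo_interior_closure_mem_interior
      (by rw [hΩo.interior_eq]; exact hzΩ)
      (frontier_subset_closure hζ) (by linarith : (0:ℝ) < 1 - s) hs0 (by ring)
    rw [hΩo.interior_eq] at h
    have heq : (1 - s) • z + s • ζ = z + s • (ζ - z) := by
      rw [sub_smul, smul_sub, one_smul]; abel
    rwa [heq] at h
  -- the key inequality
  have hkey : ∀ s : ℝ, 0 ≤ s → s < 1 → u z ≤ u (z + s • (ζ - z)) := by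
    intro s hs0 hs1
    set θ : ℝ := t₀ / (t₀ + s) with hθ_def
    have hts : 0 < t₀ + s := by linarith
    have hθ0 : 0 < θ := by positivity
    have hθ1 : θ ≤ 1 := by
      rw [hθ_def, div_le_one hts]; linarith
    have hcombo : θ • (z + s • (ζ - z)) + (1 - θ) • (z - t₀ • (ζ - z)) = z := by
      have hne : t₀ + s ≠ 0 := hts.ne'
      have hcoef : θ * s - (1 - θ) * t₀ = 0 := by
        rw [hθ_def]; field_simp; ring
      have expand : θ • (z + s • (ζ - z)) + (1 - θ) • (z - t₀ • (ζ - z)) =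
          (θ + (1 - θ)) • z + (θ * s - (1 - θ) * t₀) • (ζ - z) := by
        simp only [smul_add, smul_sub, smul_smul, add_smul, sub_smul, one_smul]
        abel
      rw [expand, hcoef]
      simp
    have hconv := hu_conv.2 (hζs s hs0 hs1) hyt
      (show (0:ℝ) ≤ θ from le_of_lt hθ0) (show (0:ℝ) ≤ 1 - θ by linarith)
      (show θ + (1 - θ) = 1 by ring)
    rw [hcombo] at hconv
    simp only [smul_eq_mul] at hconv
    have hub : u (z - t₀ • (ζ - z)) ≤ u z := hzmax (subset_closure hyt)
    nlinarith
  -- take the limit s → 1⁻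
  have hlim : Filter.Tendsto (fun k : ℕ => z + (1 - 1/(k+1 : ℝ)) • (ζ - z)) Filter.atTop
      (nhds ζ) := by
    have h1 : Filter.Tendsto (fun k : ℕ => 1 - 1/(k+1 : ℝ)) Filter.atTop (nhds 1) := by
      have := tendsto_one_div_add_atTop_nhds_zero_nat (𝕜 := ℝ)
      have h2 := this.const_sub (1:ℝ)
      simpa using h2
    have h3 := (h1.smul_const (ζ - z)).const_add z
    simpa using h3
  have hmem : ∀ k : ℕ, z + (1 - 1/(k+1 : ℝ)) • (ζ - z) ∈ closure Ω := by
    intro k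
    apply subset_closure
    apply hζs
    · have : (0:ℝ) < k + 1 := by positivity
      have : 1/(k+1 : ℝ) ≤ 1 := by
        rw [div_le_one (by positivity)]; linarith
      linarith
    · have : (0:ℝ) < 1/(k+1:ℝ) := by positivity
      linarith
  have hlim2 : Filter.Tendsto (fun k : ℕ => u (z + (1 - 1/(k+1 : ℝ)) • (ζ - z))) Filter.atTop
      (nhds (u ζ)) := by
    have hcw : ContinuousWithinAt u (closure Ω) ζ := hu_cont ζ (frontier_subset_closure hζ)
    exact hcw.tendsto.comp (tendsto_nhdsWithin_of_tendsto_nhds_of_eventually_within _ hlim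
      (Filter.Eventually.of_forall hmem))
  have hge : ∀ k : ℕ, u z ≤ u (z + (1 - 1/(k+1 : ℝ)) • (ζ - z)) := by
    intro k
    apply hkey
    · have : 1/(k+1 : ℝ) ≤ 1 := by
        rw [div_le_one (by positivity)]; linarith [Nat.cast_nonneg (α := ℝ) k]
      linarith
    · have : (0:ℝ) < 1/(k+1:ℝ) := by positivity
      linarith
  have : u z ≤ u ζ := le_of_tendsto_of_tendsto tendsto_const_nhds hlim2
    (Filter.Eventually.of_forall hge)
  rw [hfr ζ hζ] at this
  linarith


/-- Main measure estimate: pointwise bound from the Monge–Ampère super-solution property. -/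
lemma mainBox {n : ℕ} (hn : 2 ≤ n) {q : ℝ}
    {Ω : Set (EuclideanSpace ℝ (Fin n))} {u : EuclideanSpace ℝ (Fin n) → ℝ}
    (hΩo : IsOpen Ω) (hΩb : Bornology.IsBounded Ω)
    (hu_cont : ContinuousOn u (closure Ω)) (hu_conv : ConvexOn ℝ Ω u)
    (hsuper : IsAlekSuper n q Ω u)
    (L : EuclideanSpace ℝ (Fin n) ≃ₗᵢ[ℝ] EuclideanSpace ℝ (Fin n))
    (x₀ : EuclideanSpace ℝ (Fin n)) {c : ℝ}
    {A : Set (EuclideanSpace ℝ (Fin n))} (hAo : IsOpen A) (hAΩ : A ⊆ Ω)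
    (hbd : ∀ y ∈ closure A \ A, 0 ≤ u y + c * (L (y - x₀)) (lastIdx n hn))
    {S : ℝ} (hS : ∀ y ∈ A, |u y| ^ q ≤ S)
    {z₀ : EuclideanSpace ℝ (Fin n)} (hz₀ : z₀ ∈ A)
    {m : ℝ} (hm : 0 < m) (hmz : u z₀ + c * (L (z₀ - x₀)) (lastIdx n hn) = -m)
    {R : Fin n → ℝ} (hR : ∀ j, 0 < R j)
    (hwidth : ∀ y ∈ A, ∀ j, |(L (y - z₀)) j| ≤ R j) :
    m ^ n ≤ n ^ n * S * (∏ j, R j) ^ 2 := by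
  classical
  set N : Fin n := lastIdx n hn with hN_def
  set v : EuclideanSpace ℝ (Fin n) → ℝ := fun y => u y + c * (L (y - x₀)) N with hv_def
  -- convexity of v
  have hlin : ∀ (α β : ℝ) (y z : EuclideanSpace ℝ (Fin n)), α + β = 1 →
      (L (α • y + β • z - x₀)) N = α * (L (y - x₀)) N + β * (L (z - x₀)) N := by
    intro α β y z hab
    have harg : α • y + β • z - x₀ = α • (y - x₀) + β • (z - x₀) := by
      have h1 : α • (y - x₀) + β • (z - x₀) = α • y + β • z - (α + β) • x₀ := by
        rw [smul_sub, smul_sub, add_smul]; abel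
      rw [h1, hab, one_smul]
    rw [harg, map_add, L.map_smul, L.map_smul]
    rfl
  have hvconv : ConvexOn ℝ Ω v := by
    refine ⟨hu_conv.1, fun y hy z hz α β hα hβ hab => ?_⟩
    have h1 := hu_conv.2 hy hz hα hβ hab
    have h2 := hlin α β y z hab
    simp only [hv_def, smul_eq_mul] at *
    rw [h2]
    ring_nf
    ring_nf at h1
    nlinarith [h1]
  have hvcont : ContinuousOn v (closure A) := by
    refine (hu_cont.mono (closure_mono hAΩ)).add (Continuous.continuousOn ?_)
    exact continuous_const.mul ((EuclideanSpace.proj N).continuous.comp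
      (L.continuous.comp (continuous_id.sub continuous_const)))
  -- the shifted box of slopes
  set e : EuclideanSpace ℝ (Fin n) := L.symm (EuclideanSpace.single N 1) with he_def
  have hLe : L e = EuclideanSpace.single N 1 := L.apply_symm_apply _
  set δ : Fin n → ℝ := fun j => if j = N then -c else 0 with hδ_def
  have hBu : {p : EuclideanSpace ℝ (Fin n) | ∀ j, |(L p) j - δ j| < m / (n * R j)} ⊆
      ⋃ x ∈ A, subdiff n Ω u x := by
    intro p hp
    have hp' : ∀ j, |(L (p + c • e)) j| < m / (n * R j) := by
      intro j
      have hco : (L (p + c • e)) j = (L p) j + c * (EuclideanSpace.single N (1:ℝ)) j := by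
        rw [map_add, L.map_smul, hLe]; rfl
      rw [hco, EuclideanSpace.single_apply]
      have hpj := hp j
      by_cases hj : j = N
      · simp only [hδ_def, if_pos hj] at hpj ⊢
        rw [mul_one]
        rwa [sub_neg_eq_add] at hpj
      · simp only [hδ_def, if_neg hj] at hpj ⊢
        rw [mul_zero, add_zero]
        rwa [sub_zero] at hpj
    obtain ⟨z, hzA, hzsub⟩ := boxSub hn hΩo hΩb hAo hAΩ hvconv hvcont hbd L hz₀ hm hmz hR
      hwidth (p + c • e) hp'
    refine Set.mem_iUnion₂.2 ⟨z, hzA, ?_⟩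
    intro y hyΩ
    have h := hzsub y hyΩ
    have h2 : ⟪e, y - z⟫ = (L (y - z)) N := by
      rw [← L.inner_map_map e (y - z), hLe]
      simp [EuclideanSpace.inner_single_left]
    have hie : ⟪p + c • e, y - z⟫ = ⟪p, y - z⟫ + c * (L (y - z)) N := by
      rw [inner_add_left, real_inner_smul_left, h2]
    have hdecomp : (L (y - x₀)) N - (L (z - x₀)) N = (L (y - z)) N := by
      have h' : L (y - z) = L (y - x₀) - L (z - x₀) := by
        rw [← map_sub]; congr 1; abel
      rw [h']; rfl
    simp only [hv_def] at h
    rw [hie] at h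
    have hce : c * (L (y - z)) N = c * ((L (y - x₀)) N) - c * ((L (z - x₀)) N) := by
      rw [← hdecomp]; ring
    linarith [h, hce]
  -- volume comparisons
  have hvol1 : volume {p : EuclideanSpace ℝ (Fin n) | ∀ j, |(L p) j - δ j| < m / (n * R j)} =
      ∏ j, ENNReal.ofReal (2 * (m / (n * R j))) := boxVol L δ _
  have h2 : volume {p : EuclideanSpace ℝ (Fin n) | ∀ j, |(L p) j - δ j| < m / (n * R j)} ≤
      maMeasure n Ω u A := measure_mono hBu
  have h3 := hsuper A hAΩ hAo.measurableSet
  have hS0 : 0 ≤ S := le_trans (Real.rpow_nonneg (abs_nonneg _) q) (hS z₀ hz₀)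
  have h4 : ∫⁻ x in A, ENNReal.ofReal (|u x| ^ q) ≤ ENNReal.ofReal S * volume A := by
    calc ∫⁻ x in A, ENNReal.ofReal (|u x| ^ q) ≤ ∫⁻ _x in A, ENNReal.ofReal S :=
          setLIntegral_mono measurable_const (fun x hx => ENNReal.ofReal_le_ofReal (hS x hx))
      _ = ENNReal.ofReal S * volume A := setLIntegral_const A _
  have h5 : volume A ≤ ∏ j, ENNReal.ofReal (2 * R j) := by
    refine boxVolLe L (fun j => (L z₀) j) R A ?_
    intro y hyA j
    have hw := hwidth y hyA j
    have : (L (y - z₀)) j = (L y) j - (L z₀) j := by rw [map_sub]; rfl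
    rwa [this] at hw
  have hn0 : (0:ℝ) < n := Nat.cast_pos.2 (by omega)
  have hfac1 : ∀ j : Fin n, (0:ℝ) ≤ 2 * (m / (n * R j)) := fun j =>
    le_of_lt (mul_pos two_pos (div_pos hm (mul_pos hn0 (hR j))))
  have hfac2 : ∀ j : Fin n, (0:ℝ) ≤ 2 * R j := fun j => le_of_lt (mul_pos two_pos (hR j))
  have hchain : ENNReal.ofReal (∏ j, (2 * (m / (n * R j)))) ≤
      ENNReal.ofReal (S * ∏ j, (2 * R j)) := by
    have hl : ENNReal.ofReal (∏ j, (2 * (m / (n * R j)))) =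
        ∏ j, ENNReal.ofReal (2 * (m / (n * R j))) :=
      ENNReal.ofReal_prod_of_nonneg (fun j _ => hfac1 j)
    have hr : ENNReal.ofReal (S * ∏ j, (2 * R j)) =
        ENNReal.ofReal S * ∏ j, ENNReal.ofReal (2 * R j) := by
      rw [ENNReal.ofReal_mul hS0, ENNReal.ofReal_prod_of_nonneg (fun j _ => hfac2 j)]
    rw [hl, hr, ← hvol1]
    exact le_trans h2 (le_trans h3 (le_trans h4 (mul_le_mul_right h5 _)))
  have hrhs0 : 0 ≤ S * ∏ j, (2 * R j) :=
    mul_nonneg hS0 (Finset.prod_nonneg fun j _ => hfac2 j)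
  have hreal : ∏ j, (2 * (m / (n * R j))) ≤ S * ∏ j, (2 * R j) :=
    (ENNReal.ofReal_le_ofReal_iff hrhs0).1 hchain
  -- algebra
  have hprodR : 0 < ∏ j, R j := Finset.prod_pos fun j _ => hR j
  have hfact : ∀ j : Fin n, 2 * (m / (n * R j)) = (2 * m / n) / R j := by
    intro j
    rw [div_div, mul_div_assoc]
  have hLHS : ∏ j, (2 * (m / (n * R j))) = (2 * m / n) ^ n / ∏ j, R j := by
    rw [Finset.prod_congr rfl (fun j _ => hfact j), Finset.prod_div_distrib,
      Finset.prod_const, Finset.card_univ, Fintype.card_fin]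
  have hRHS : ∏ j, (2 * R j) = 2 ^ n * ∏ j, R j := by
    rw [Finset.prod_mul_distrib, Finset.prod_const, Finset.card_univ, Fintype.card_fin]
  rw [hLHS, hRHS] at hreal
  have h6 : (2 * m / n) ^ n ≤ S * (2 ^ n * ∏ j, R j) * ∏ j, R j :=
    (div_le_iff₀ hprodR).1 hreal
  have h7 : (2 * m / n) ^ n = 2 ^ n * m ^ n / (n:ℝ) ^ n := by
    rw [div_pow, mul_pow]
  rw [h7] at h6
  have hnn : (0:ℝ) < (n:ℝ) ^ n := by positivity
  have h8 : 2 ^ n * m ^ n ≤ S * (2 ^ n * ∏ j, R j) * (∏ j, R j) * (n:ℝ) ^ n :=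
    (div_le_iff₀ hnn).1 h6
  have h9 : S * (2 ^ n * ∏ j, R j) * (∏ j, R j) * (n:ℝ) ^ n =
      2 ^ n * ((n:ℝ) ^ n * S * (∏ j, R j) ^ 2) := by ring
  rw [h9] at h8
  have h2n : (0:ℝ) < 2 ^ n := by positivity
  exact le_of_mul_le_mul_left h8 h2n


set_option maxHeartbeats 1000000 in
/-- Theorem 1.4 (1), case `n - ā - 2 > 0`. -/
theorem boundary_estimate_alek_super_case1
    (n : ℕ) (hn : 2 ≤ n) (q : ℝ) (hq0 : 0 ≤ q) (hqn : q < n)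
    (a η : Fin (n - 1) → ℝ) (ha : ∀ i, 1 ≤ a i) (hη : ∀ i, 0 < η i)
    (hcase : 0 < (n : ℝ) - abar n a - 2)
    (D : ℝ) (hD : 0 < D) :
    ∃ C > 0, ∀ (Ω : Set (EuclideanSpace ℝ (Fin n))) (u : EuclideanSpace ℝ (Fin n) → ℝ)
      (x₀ : EuclideanSpace ℝ (Fin n)),
      IsOpen Ω → Convex ℝ Ω → Bornology.IsBounded Ω → Metric.diam Ω ≤ D →
      x₀ ∈ frontier Ω → ExtCondAt n hn a η Ω x₀ →
      ContinuousOn u (closure Ω) → ConvexOn ℝ Ω u →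
      (∀ x ∈ frontier Ω, u x = 0) → IsAlekSuper n q Ω u →
      ∀ x ∈ Ω, Metric.infDist x (frontier Ω) = ‖x - x₀‖ →
        |u x| ≤ C * Metric.infDist x (frontier Ω) ^ ((abar n a + 2) / n) := by
  classical
  have hn0 : (0:ℝ) < n := Nat.cast_pos.2 (by omega)
  have hapos : ∀ i : Fin (n-1), 0 < a i := fun i => lt_of_lt_of_le one_pos (ha i)
  have habar0 : 0 ≤ abar n a :=
    Finset.sum_nonneg fun i _ => div_nonneg (by norm_num) (le_of_lt (hapos i))
  set lam : ℝ := (abar n a + 2) / n with hlam_def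
  have hlam_pos : 0 < lam := div_pos (by linarith) hn0
  have hlam_lt1 : lam < 1 := by rw [hlam_def, div_lt_one hn0]; linarith
  have hlam_le1 : lam ≤ 1 := le_of_lt hlam_lt1
  set Mbar : ℝ := max (((n:ℝ)^n * D^(2*n)) ^ (1/((n:ℝ) - q))) 1 with hM_def
  have hM1 : (1:ℝ) ≤ Mbar := le_max_right _ _
  have hM0 : (0:ℝ) < Mbar := lt_of_lt_of_le one_pos hM1
  set P : ℝ := ∏ i : Fin (n-1), (1 / η i) ^ (1 / a i) with hP_def
  have hP0 : 0 < P := Finset.prod_pos fun i _ =>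
    Real.rpow_pos_of_pos (by have := hη i; positivity) _
  have hbase0 : (0:ℝ) < (n:ℝ)^n * Mbar^q * (2^(n-1) * P)^2 := by
    have h1 : (0:ℝ) < Mbar^q := Real.rpow_pos_of_pos hM0 q
    positivity
  set C₂ : ℝ := ((n:ℝ)^n * Mbar^q * (2^(n-1) * P)^2) ^ (1/(n:ℝ)) with hC2_def
  have hC2_0 : 0 < C₂ := Real.rpow_pos_of_pos hbase0 _
  have hden : 0 < (2:ℝ)^(-lam) - 2⁻¹ := by
    have h1 : (2:ℝ)^(-(1:ℝ)) < (2:ℝ)^(-lam) :=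
      Real.rpow_lt_rpow_left_iff one_lt_two |>.2 (by linarith)
    have h2 : (2:ℝ)^(-(1:ℝ)) = 2⁻¹ := Real.rpow_neg_one 2
    rw [h2] at h1
    exact sub_pos.2 h1
  set K : ℝ := max (Mbar / D ^ lam) (C₂ / ((2:ℝ)^(-lam) - 2⁻¹)) with hK_def
  have hDlam : 0 < D ^ lam := Real.rpow_pos_of_pos hD _
  have hK0 : 0 < K := lt_of_lt_of_le (div_pos hM0 hDlam) (le_max_left _ _)
  have h2lampos : (0:ℝ) < (2:ℝ) ^ lam := Real.rpow_pos_of_pos two_pos _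
  have h2lam_le : (2:ℝ)^lam ≤ 2 := by
    have h := Real.rpow_le_rpow_of_exponent_le one_le_two hlam_le1
    rwa [Real.rpow_one] at h
  refine ⟨2 ^ lam * K, mul_pos h2lampos hK0, ?_⟩
  intro Ω u x₀ hΩo hΩc hΩb hdiam hx₀ hext hu_cont hu_conv hu_fr hsuper x hxΩ hdist
  obtain ⟨T, hT0, hText⟩ := hext
  set L := T.linearIsometryEquiv with hL_def
  have hTL : ∀ y : EuclideanSpace ℝ (Fin n), T y = L (y - x₀) := by
    intro y
    have h := T.map_vsub y x₀
    rw [vsub_eq_sub, vsub_eq_sub, hT0, sub_zero] at h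
    exact h.symm
  have hcoordN : ∀ y ∈ Ω,
      (∑ i, η i * |(L (y - x₀)) (coordIdx n i)| ^ a i) < (L (y - x₀)) (lastIdx n hn) := by
    intro y hy
    have h : T y ∈ extSet n hn a η := hText (Set.mem_image_of_mem T hy)
    rw [hTL y] at h
    exact h
  have hsum_nonneg : ∀ y : EuclideanSpace ℝ (Fin n),
      0 ≤ ∑ i, η i * |(L (y - x₀)) (coordIdx n i)| ^ a i :=
    fun y => Finset.sum_nonneg fun i _ =>
      mul_nonneg (le_of_lt (hη i)) (Real.rpow_nonneg (abs_nonneg _) _)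
  have hcoordpos : ∀ y ∈ Ω, 0 < (L (y - x₀)) (lastIdx n hn) :=
    fun y hy => lt_of_le_of_lt (hsum_nonneg y) (hcoordN y hy)
  have hcoord_le_norm : ∀ (w : EuclideanSpace ℝ (Fin n)) (j : Fin n), |w j| ≤ ‖w‖ := by
    intro w j
    have h := abs_real_inner_le_norm (EuclideanSpace.single j (1:ℝ)) w
    simpa [EuclideanSpace.inner_single_left] using h
  have hdistD : ∀ y ∈ Ω, ‖y - x₀‖ ≤ D := by
    intro y hy
    have h1 : dist y x₀ ≤ Metric.diam (closure Ω) :=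
      Metric.dist_le_diam_of_mem hΩb.closure (subset_closure hy) (frontier_subset_closure hx₀)
    rw [Metric.diam_closure] at h1
    rw [← dist_eq_norm]
    exact le_trans h1 hdiam
  have hcoord_le : ∀ y : EuclideanSpace ℝ (Fin n),
      (L (y - x₀)) (lastIdx n hn) ≤ ‖y - x₀‖ := by
    intro y
    refine le_trans (le_abs_self _) (le_trans (hcoord_le_norm _ _) (le_of_eq ?_))
    exact L.norm_map _
  have hcontc : Continuous fun w : EuclideanSpace ℝ (Fin n) =>
      (L (w - x₀)) (lastIdx n hn) :=
    (EuclideanSpace.proj (lastIdx n hn)).continuous.comp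
      (L.continuous.comp (continuous_id.sub continuous_const))
  have hcoordcl : ∀ y ∈ closure Ω, 0 ≤ (L (y - x₀)) (lastIdx n hn) := by
    intro y hy
    have hclosed : IsClosed {w : EuclideanSpace ℝ (Fin n) |
        0 ≤ (L (w - x₀)) (lastIdx n hn)} := isClosed_le continuous_const hcontc
    exact closure_minimal (fun w hw => le_of_lt (hcoordpos w hw)) hclosed hy
  have hu_nonpos : ∀ y ∈ Ω, u y ≤ 0 :=
    convex_nonpos hΩo hΩb hu_cont hu_conv hu_fr hx₀
  -- global lower bound
  have hglob : ∀ y ∈ Ω, -Mbar ≤ u y := by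
    by_contra hcon
    push_neg at hcon
    obtain ⟨y₀, hy₀Ω, hy₀⟩ := hcon
    set A : Set (EuclideanSpace ℝ (Fin n)) := Ω ∩ u ⁻¹' (Set.Iio 0) with hA_def
    have hAo : IsOpen A := (hu_cont.mono subset_closure).isOpen_inter_preimage hΩo isOpen_Iio
    have hAΩ : A ⊆ Ω := Set.inter_subset_left
    have hy₀A : y₀ ∈ A := ⟨hy₀Ω, show u y₀ < 0 by linarith⟩
    have hcompA : IsCompact (closure A) :=
      Metric.isCompact_of_isClosed_isBounded isClosed_closure (hΩb.subset hAΩ).closure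
    obtain ⟨z₁, hz₁cl, hz₁max⟩ := hcompA.exists_isMaxOn ⟨y₀, subset_closure hy₀A⟩
      ((hu_cont.mono (closure_mono hAΩ)).neg)
    have hz₁max' : ∀ w ∈ closure A, -u w ≤ -u z₁ := fun w hw => hz₁max hw
    have hm₁ : Mbar < -u z₁ := lt_of_lt_of_le (by linarith) (hz₁max' y₀ (subset_closure hy₀A))
    have hm₁0 : (0:ℝ) < -u z₁ := lt_trans hM0 hm₁
    have hz₁Ω : z₁ ∈ Ω := by
      have hz₁clΩ : z₁ ∈ closure Ω := closure_mono hAΩ hz₁cl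
      by_cases h : z₁ ∈ Ω
      · exact h
      · exfalso
        have hfr : z₁ ∈ frontier Ω := by rw [hΩo.frontier_eq]; exact ⟨hz₁clΩ, h⟩
        have := hu_fr z₁ hfr
        linarith
    have hz₁A : z₁ ∈ A := ⟨hz₁Ω, show u z₁ < 0 by linarith⟩
    have hbd1 : ∀ y ∈ closure A \ A, 0 ≤ u y + 0 * (L (y - x₀)) (lastIdx n hn) := by
      intro y hy
      rw [zero_mul, add_zero]
      have hyclΩ : y ∈ closure Ω := closure_mono hAΩ hy.1
      by_cases h : y ∈ Ω
      · by_contra hneg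
        push_neg at hneg
        exact hy.2 ⟨h, show u y < 0 by linarith⟩
      · have hfr : y ∈ frontier Ω := by rw [hΩo.frontier_eq]; exact ⟨hyclΩ, h⟩
        rw [hu_fr y hfr]
    have hS1 : ∀ y ∈ A, |u y| ^ q ≤ (-u z₁) ^ q := by
      intro y hyA
      apply Real.rpow_le_rpow (abs_nonneg _) _ hq0
      rw [abs_of_nonpos (le_of_lt hyA.2)]
      exact hz₁max' y (subset_closure hyA)
    have hmz1 : u z₁ + 0 * (L (z₁ - x₀)) (lastIdx n hn) = -(-u z₁) := by ring
    have hwidth1 : ∀ y ∈ A, ∀ j, |(L (y - z₁)) j| ≤ D := by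
      intro y hyA j
      refine le_trans (hcoord_le_norm _ j) ?_
      rw [L.norm_map, ← dist_eq_norm]
      exact le_trans (Metric.dist_le_diam_of_mem hΩb (hAΩ hyA) (hAΩ hz₁A)) hdiam
    have hbox := mainBox hn hΩo hΩb hu_cont hu_conv hsuper L x₀ hAo hAΩ hbd1 hS1 hz₁A
      hm₁0 hmz1 (R := fun _ => D) (fun _ => hD) hwidth1
    have hprodD : (∏ _j : Fin n, D) = D ^ n := by
      rw [Finset.prod_const, Finset.card_univ, Fintype.card_fin]
    rw [hprodD] at hbox
    have hm₁rp : (-u z₁) ^ ((n:ℝ)) ≤ (n:ℝ)^n * D^(2*n) * (-u z₁) ^ q := by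
      rw [Real.rpow_natCast]
      calc (-u z₁) ^ n ≤ (n:ℝ)^n * (-u z₁)^q * (D^n)^2 := hbox
        _ = (n:ℝ)^n * D^(2*n) * (-u z₁)^q := by rw [← pow_mul]; ring
    have hmq : (0:ℝ) < (-u z₁) ^ q := Real.rpow_pos_of_pos hm₁0 q
    have hsub : (-u z₁) ^ ((n:ℝ) - q) ≤ (n:ℝ)^n * D^(2*n) := by
      rw [Real.rpow_sub hm₁0, div_le_iff₀ hmq]
      exact hm₁rp
    have hnq : (0:ℝ) < (n:ℝ) - q := by linarith
    have hm₁le : -u z₁ ≤ ((n:ℝ)^n * D^(2*n)) ^ (1/((n:ℝ)-q)) := by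
      have h1 : ((-u z₁) ^ ((n:ℝ)-q)) ^ (1/((n:ℝ)-q)) ≤
          ((n:ℝ)^n * D^(2*n)) ^ (1/((n:ℝ)-q)) :=
        Real.rpow_le_rpow (Real.rpow_nonneg (le_of_lt hm₁0) _) hsub
          (le_of_lt (by positivity))
      rwa [← Real.rpow_mul (le_of_lt hm₁0), mul_one_div, div_self hnq.ne',
        Real.rpow_one] at h1
    have : -u z₁ ≤ Mbar := le_trans hm₁le (le_max_left _ _)
    linarith
  -- main iteration
  have hmain : ∀ k : ℕ, ∀ y ∈ Ω, (L (y - x₀)) (lastIdx n hn) ≤ D / 2^k →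
      -u y ≤ K * (D / 2^k) ^ lam := by
    intro k
    induction k with
    | zero =>
      intro y hy _
      simp only [pow_zero, div_one]
      have h1 : -u y ≤ Mbar := by linarith [hglob y hy]
      have h2 : Mbar = (Mbar / D ^ lam) * D ^ lam := (div_mul_cancel₀ _ hDlam.ne').symm
      calc -u y ≤ Mbar := h1
        _ = (Mbar / D ^ lam) * D ^ lam := h2
        _ ≤ K * D ^ lam := mul_le_mul_of_nonneg_right (le_max_left _ _) (le_of_lt hDlam)
    | succ k ih =>
      intro y hy hyc
      set H : ℝ := D / 2^k with hH_def
      have hH0 : 0 < H := by rw [hH_def]; positivity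
      have hH2 : D / 2^(k+1) = H / 2 := by rw [hH_def, pow_succ]; ring
      rw [hH2] at hyc ⊢
      set B : ℝ := K * H ^ lam with hB_def
      have hHlam0 : 0 < H ^ lam := Real.rpow_pos_of_pos hH0 _
      have hB0 : 0 < B := mul_pos hK0 hHlam0
      set c : ℝ := B / H with hc_def
      have hc0 : 0 < c := div_pos hB0 hH0
      have hcH : c * H = B := by rw [hc_def]; field_simp
      have hhalf : K * H ^ lam / 2 ≤ K * (H / 2) ^ lam := by
        rw [Real.div_rpow (le_of_lt hH0) (by norm_num : (0:ℝ) ≤ 2), mul_div_assoc]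
        refine mul_le_mul_of_nonneg_left ?_ (le_of_lt hK0)
        exact div_le_div_of_nonneg_left (le_of_lt hHlam0) (Real.rpow_pos_of_pos two_pos lam)
          h2lam_le
      have hvcontΩ : ContinuousOn
          (fun w => u w + c * (L (w - x₀)) (lastIdx n hn)) Ω :=
        (hu_cont.mono subset_closure).add (continuous_const.mul hcontc).continuousOn
      set A : Set (EuclideanSpace ℝ (Fin n)) :=
        (Ω ∩ (fun w => u w + c * (L (w - x₀)) (lastIdx n hn)) ⁻¹' (Set.Iio 0)) ∩
          ((fun w : EuclideanSpace ℝ (Fin n) => (L (w - x₀)) (lastIdx n hn)) ⁻¹'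
            (Set.Iio H)) with hA_def
      have hAo : IsOpen A :=
        (hvcontΩ.isOpen_inter_preimage hΩo isOpen_Iio).inter (isOpen_Iio.preimage hcontc)
      have hAΩ : A ⊆ Ω := fun w hw => hw.1.1
      have hAmem : ∀ w, w ∈ A ↔
          w ∈ Ω ∧ u w + c * (L (w - x₀)) (lastIdx n hn) < 0 ∧
            (L (w - x₀)) (lastIdx n hn) < H := by
        intro w
        constructor
        · rintro ⟨⟨h1, h2⟩, h3⟩; exact ⟨h1, h2, h3⟩
        · rintro ⟨h1, h2, h3⟩; exact ⟨⟨h1, h2⟩, h3⟩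
      have hclH : ∀ w ∈ closure A, (L (w - x₀)) (lastIdx n hn) ≤ H :=
        fun w hw => closure_minimal
          (fun w' hw' => le_of_lt ((hAmem w').1 hw').2.2)
          (isClosed_le hcontc continuous_const) hw
      have hbd2 : ∀ w ∈ closure A \ A,
          0 ≤ u w + c * (L (w - x₀)) (lastIdx n hn) := by
        intro w hw
        have hwcl : w ∈ closure Ω := closure_mono hAΩ hw.1
        by_cases hwΩ : w ∈ Ω
        · by_contra hneg
          push_neg at hneg
          have hH' : (L (w - x₀)) (lastIdx n hn) < H := by
            rcases lt_or_eq_of_le (hclH w hw.1) with h | h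
            · exact h
            · exfalso
              have hihw := ih w hwΩ (le_of_eq h)
              rw [h] at hneg
              rw [hcH] at hneg
              linarith
          exact hw.2 ((hAmem w).2 ⟨hwΩ, hneg, hH'⟩)
        · have hfr : w ∈ frontier Ω := by rw [hΩo.frontier_eq]; exact ⟨hwcl, hwΩ⟩
          rw [hu_fr w hfr, zero_add]
          exact mul_nonneg (le_of_lt hc0) (hcoordcl w hwcl)
      by_cases hyA : y ∈ A
      · -- the point is in A : use the measure estimate
        set m₂ : ℝ := -(u y + c * (L (y - x₀)) (lastIdx n hn)) with hm₂_def
        have hyA' := (hAmem y).1 hyA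
        have hm₂0 : 0 < m₂ := by rw [hm₂_def]; linarith [hyA'.2.1]
        have hmzy : u y + c * (L (y - x₀)) (lastIdx n hn) = -m₂ := by
          rw [hm₂_def]; ring
        have hS2 : ∀ w ∈ A, |u w| ^ q ≤ Mbar ^ q := by
          intro w hwA
          have hwΩ := hAΩ hwA
          apply Real.rpow_le_rpow (abs_nonneg _) _ hq0
          rw [abs_of_nonpos (hu_nonpos w hwΩ)]
          linarith [hglob w hwΩ]
        set R : Fin n → ℝ := fun j =>
          if hj : (j:ℕ) < n - 1 then 2 * (H / η ⟨j, hj⟩) ^ (1 / a ⟨j, hj⟩) else H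
          with hR_def
        have hRcoord : ∀ i : Fin (n-1), R (coordIdx n i) = 2 * (H / η i) ^ (1 / a i) := by
          intro i
          have hlt : ((coordIdx n i : Fin n) : ℕ) < n - 1 := i.isLt
          simp only [hR_def]
          rw [dif_pos hlt]
          have hii : (⟨((coordIdx n i : Fin n) : ℕ), hlt⟩ : Fin (n-1)) = i := Fin.ext rfl
          rw [hii]
        have hRlast : R (lastIdx n hn) = H := by
          have hnlt : ¬ (((lastIdx n hn : Fin n) : ℕ) < n - 1) := by
            simp [lastIdx]
          simp only [hR_def]
          rw [dif_neg hnlt]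
        have hR0 : ∀ j, 0 < R j := by
          intro j
          simp only [hR_def]
          by_cases hj : (j:ℕ) < n - 1
          · rw [dif_pos hj]
            have : 0 < (H / η ⟨j, hj⟩) ^ (1 / a ⟨j, hj⟩) :=
              Real.rpow_pos_of_pos (div_pos hH0 (hη _)) _
            linarith
          · rw [dif_neg hj]; exact hH0
        have hwbound : ∀ w ∈ A, ∀ (i : Fin (n-1)),
            |(L (w - x₀)) (coordIdx n i)| ≤ (H / η i) ^ (1 / a i) := by
          intro w hwA i
          have hwΩ := hAΩ hwA
          have hcoordw : (L (w - x₀)) (lastIdx n hn) < H := ((hAmem w).1 hwA).2.2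
          have hterm : η i * |(L (w - x₀)) (coordIdx n i)| ^ (a i) < H := by
            have hle : η i * |(L (w - x₀)) (coordIdx n i)| ^ (a i) ≤
                ∑ i', η i' * |(L (w - x₀)) (coordIdx n i')| ^ (a i') :=
              Finset.single_le_sum
                (f := fun i' => η i' * |(L (w - x₀)) (coordIdx n i')| ^ (a i'))
                (fun i' _ => mul_nonneg (le_of_lt (hη i'))
                  (Real.rpow_nonneg (abs_nonneg _) _)) (Finset.mem_univ i)
            exact lt_of_le_of_lt hle (lt_trans (hcoordN w hwΩ) hcoordw)
          have h1 : |(L (w - x₀)) (coordIdx n i)| ^ (a i) ≤ H / η i :=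
            le_of_lt ((lt_div_iff₀' (hη i)).2 hterm)
          calc |(L (w - x₀)) (coordIdx n i)|
              = (|(L (w - x₀)) (coordIdx n i)| ^ (a i)) ^ (1 / a i) := by
                rw [← Real.rpow_mul (abs_nonneg _), mul_one_div, div_self (hapos i).ne',
                  Real.rpow_one]
            _ ≤ (H / η i) ^ (1 / a i) :=
                Real.rpow_le_rpow (Real.rpow_nonneg (abs_nonneg _) _) h1
                  (le_of_lt (by have := hapos i; positivity))
        have hwidth2 : ∀ w ∈ A, ∀ j, |(L (w - y)) j| ≤ R j := by
          intro w hwA j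
          have hsplit : (L (w - y)) j = (L (w - x₀)) j - (L (y - x₀)) j := by
            have h' : L (w - y) = L (w - x₀) - L (y - x₀) := by
              rw [← map_sub]; congr 1; abel
            rw [h']; rfl
          rw [hsplit]
          by_cases hj : (j:ℕ) < n - 1
          · have hj_eq : j = coordIdx n ⟨j, hj⟩ := Fin.ext rfl
            have hb1 := hwbound w hwA ⟨j, hj⟩
            have hb2 := hwbound y hyA ⟨j, hj⟩
            rw [← hj_eq] at hb1 hb2
            have hRj : R j = 2 * (H / η ⟨j, hj⟩) ^ (1 / a ⟨j, hj⟩) := by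
              simp only [hR_def]
              rw [dif_pos hj]
            rw [hRj]
            calc |(L (w - x₀)) j - (L (y - x₀)) j|
                ≤ |(L (w - x₀)) j| + |(L (y - x₀)) j| := abs_sub _ _
              _ ≤ 2 * (H / η ⟨j, hj⟩) ^ (1 / a ⟨j, hj⟩) := by linarith
          · have hj_eq : j = lastIdx n hn := by
              apply Fin.ext
              have h1 := j.isLt
              simp only [lastIdx]
              omega
            have h1 : 0 < (L (w - x₀)) (lastIdx n hn) := hcoordpos w (hAΩ hwA)
            have h2 : (L (w - x₀)) (lastIdx n hn) < H := ((hAmem w).1 hwA).2.2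
            have h3 : 0 < (L (y - x₀)) (lastIdx n hn) := hcoordpos y hy
            have h4 : (L (y - x₀)) (lastIdx n hn) < H := ((hAmem y).1 hyA).2.2
            rw [hj_eq, hRlast, abs_le]
            constructor <;> linarith
        have hbox := mainBox hn hΩo hΩb hu_cont hu_conv hsuper L x₀ hAo hAΩ hbd2 hS2 hyA
          hm₂0 hmzy hR0 hwidth2
        -- compute the product of the R's
        have hinj : Function.Injective (coordIdx n) := fun i i' h => Fin.ext (by
          have : ((coordIdx n i : Fin n) : ℕ) = ((coordIdx n i' : Fin n) : ℕ) :=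
            congrArg Fin.val h
          exact this)
        have himg : Finset.univ.image (coordIdx n) =
            Finset.univ.filter (fun j : Fin n => (j:ℕ) < n - 1) := by
          ext j
          simp only [Finset.mem_image, Finset.mem_filter, Finset.mem_univ, true_and]
          constructor
          · rintro ⟨i, _, rfl⟩; exact i.isLt
          · intro hj; exact ⟨⟨j, hj⟩, Fin.ext rfl⟩
        have hfilter2 : Finset.univ.filter (fun j : Fin n => ¬ (j:ℕ) < n - 1) =
            {lastIdx n hn} := by
          ext j
          simp only [Finset.mem_filter, Finset.mem_univ, true_and, Finset.mem_singleton]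
          constructor
          · intro h
            apply Fin.ext
            have h1 := j.isLt
            simp only [lastIdx]
            omega
          · intro h
            rw [h]
            simp [lastIdx]
        have hprodR : ∏ j, R j = (2:ℝ)^(n-1) * (H ^ (abar n a / 2) * P) * H := by
          rw [← Finset.prod_filter_mul_prod_filter_not Finset.univ
            (fun j : Fin n => (j:ℕ) < n - 1) R]
          rw [hfilter2, Finset.prod_singleton, hRlast]
          congr 1
          rw [← himg, Finset.prod_image (fun i _ i' _ h => hinj h)]
          rw [Finset.prod_congr rfl (fun i _ => hRcoord i)]
          rw [Finset.prod_mul_distrib, Finset.prod_const, Finset.card_univ,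
            Fintype.card_fin]
          congr 1
          have hfac : ∀ i : Fin (n-1),
              (H / η i) ^ (1 / a i) = H ^ (1 / a i) * (1 / η i) ^ (1 / a i) := by
            intro i
            rw [div_eq_mul_one_div H (η i)]
            exact Real.mul_rpow (le_of_lt hH0) (by have := hη i; positivity)
          rw [Finset.prod_congr rfl (fun i _ => hfac i), Finset.prod_mul_distrib]
          rw [hP_def]
          congr 1
          rw [← rpow_sum' hH0]
          congr 1
          simp only [abar]
          rw [Finset.sum_div]
          refine Finset.sum_congr rfl (fun i _ => ?_)
          rw [div_right_comm]
          norm_num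
        have hprod_sq : (∏ j, R j)^2 = (2^(n-1) * P)^2 * H ^ (abar n a + 2) := by
          rw [hprodR]
          have h1 : (2:ℝ)^(n-1) * (H ^ (abar n a / 2) * P) * H =
              (2^(n-1) * P) * (H ^ (abar n a / 2) * H) := by ring
          rw [h1, mul_pow]
          congr 1
          have h2 : H ^ (abar n a / 2) * H = H ^ (abar n a / 2 + 1) := by
            rw [Real.rpow_add hH0, Real.rpow_one]
          rw [h2]
          have h3 : (H ^ (abar n a / 2 + 1))^(2:ℕ) = H ^ ((abar n a / 2 + 1) * (2:ℝ)) := by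
            rw [Real.rpow_mul (le_of_lt hH0)]
            norm_num [Real.rpow_natCast]
          rw [h3]
          congr 1
          ring
        have hm₂n : m₂ ^ n ≤ (C₂ * H ^ lam) ^ n := by
          calc m₂ ^ n ≤ (n:ℝ)^n * Mbar^q * (∏ j, R j)^2 := hbox
            _ = ((n:ℝ)^n * Mbar^q * (2^(n-1)*P)^2) * H ^ (abar n a + 2) := by
                rw [hprod_sq]; ring
            _ = (C₂ * H ^ lam) ^ n := by
                conv_rhs => rw [mul_pow]
                congr 1
                · rw [hC2_def]
                  rw [← Real.rpow_natCast (((n:ℝ)^n * Mbar^q * (2^(n-1)*P)^2) ^ (1/(n:ℝ))) n]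
                  rw [← Real.rpow_mul (le_of_lt hbase0)]
                  rw [one_div_mul_cancel hn0.ne', Real.rpow_one]
                · rw [← Real.rpow_natCast (H ^ lam) n, ← Real.rpow_mul (le_of_lt hH0)]
                  congr 1
                  rw [hlam_def]
                  field_simp
        have hm₂le : m₂ ≤ C₂ * H ^ lam := by
          have hC₂H : (0:ℝ) ≤ C₂ * H ^ lam := le_of_lt (mul_pos hC2_0 hHlam0)
          exact le_of_pow_le_pow_left₀ (by omega) hC₂H hm₂n
        have hcy : c * (L (y - x₀)) (lastIdx n hn) ≤ B / 2 := by
          have h2 := mul_le_mul_of_nonneg_left hyc (le_of_lt hc0)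
          have h3 : c * (H/2) = B / 2 := by
            rw [hc_def]; field_simp
          linarith
        have hfinal : -u y ≤ C₂ * H^lam + B/2 := by
          have h4 : -u y = m₂ + c * (L (y - x₀)) (lastIdx n hn) := by
            rw [hm₂_def]; ring
          linarith [hm₂le, hcy]
        have hKC : C₂ + K/2 ≤ K * (2:ℝ)^(-lam) := by
          have h1 : C₂ ≤ K * ((2:ℝ)^(-lam) - 2⁻¹) := by
            have h2 : C₂ / ((2:ℝ)^(-lam) - 2⁻¹) ≤ K := le_max_right _ _
            calc C₂ = (C₂ / ((2:ℝ)^(-lam) - 2⁻¹)) * ((2:ℝ)^(-lam) - 2⁻¹) :=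
                  (div_mul_cancel₀ _ hden.ne').symm
              _ ≤ K * ((2:ℝ)^(-lam) - 2⁻¹) :=
                  mul_le_mul_of_nonneg_right h2 (le_of_lt hden)
          have h3 : K * ((2:ℝ)^(-lam) - 2⁻¹) = K * (2:ℝ)^(-lam) - K/2 := by ring
          linarith
        have hgoal : C₂*H^lam + B/2 ≤ K * (H/2)^lam := by
          have h1 : (H/2:ℝ)^lam = H^lam * (2:ℝ)^(-lam) := by
            rw [Real.div_rpow (le_of_lt hH0) (by norm_num : (0:ℝ) ≤ 2),
              Real.rpow_neg (by norm_num : (0:ℝ) ≤ 2), div_eq_mul_inv]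
          rw [h1, hB_def]
          have h2 := mul_le_mul_of_nonneg_right hKC (le_of_lt hHlam0)
          calc C₂*H^lam + K*H^lam/2 = (C₂ + K/2)*H^lam := by ring
            _ ≤ (K*(2:ℝ)^(-lam))*H^lam := h2
            _ = K*(H^lam*(2:ℝ)^(-lam)) := by ring
        linarith [hfinal, hgoal]
      · -- the point is not in A
        have hcoordy : (L (y - x₀)) (lastIdx n hn) < H := lt_of_le_of_lt hyc (by linarith)
        have hv0 : 0 ≤ u y + c * (L (y - x₀)) (lastIdx n hn) := by
          by_contra hneg
          push_neg at hneg
          exact hyA ((hAmem y).2 ⟨hy, hneg, hcoordy⟩)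
        have h1 : -u y ≤ c * (L (y - x₀)) (lastIdx n hn) := by linarith
        have h2 : c * (L (y - x₀)) (lastIdx n hn) ≤ c * (H/2) :=
          mul_le_mul_of_nonneg_left hyc (le_of_lt hc0)
        have h3 : c * (H/2) = B / 2 := by
          rw [hc_def]; field_simp
        calc -u y ≤ B / 2 := by linarith
          _ = K * H^lam / 2 := by rw [hB_def]
          _ ≤ K * (H/2)^lam := hhalf
  -- conclude
  rw [hdist]
  set d : ℝ := ‖x - x₀‖ with hd_def
  have hd0 : 0 < d := lt_of_lt_of_le (hcoordpos x hxΩ) (hcoord_le x)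
  have hdD : d ≤ D := hdistD x hxΩ
  obtain ⟨k₁, hk₁⟩ := pow_unbounded_of_one_lt (D / d) one_lt_two
  have hex : ∃ k : ℕ, D < d * 2 ^ k := by
    refine ⟨k₁, ?_⟩
    have := (div_lt_iff₀ hd0).1 hk₁
    linarith
  set k₀ := Nat.find hex with hk₀_def
  have hk₀spec : D < d * 2 ^ k₀ := Nat.find_spec hex
  have hk₀pos : k₀ ≠ 0 := by
    intro h
    rw [h, pow_zero, mul_one] at hk₀spec
    linarith
  set k := k₀ - 1 with hk_def
  have hk₀succ : k₀ = k + 1 := by omega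
  have hkmax : ¬ D < d * 2 ^ k := Nat.find_min hex (by omega)
  push_neg at hkmax
  have hdk : d ≤ D / 2 ^ k := by
    rw [le_div_iff₀ (by positivity)]
    linarith
  have hdk2 : D / 2 ^ (k+1) < d := by
    rw [div_lt_iff₀ (by positivity)]
    rw [hk₀succ] at hk₀spec
    linarith
  have hxbound := hmain k x hxΩ (le_trans (hcoord_le x) hdk)
  have hHd : D / 2 ^ k ≤ 2 * d := by
    have h1 : D / 2^k = 2 * (D / 2^(k+1)) := by rw [pow_succ]; ring
    rw [h1]; linarith
  have hmono : (D / 2^k) ^ lam ≤ (2*d) ^ lam :=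
    Real.rpow_le_rpow (by positivity) hHd (le_of_lt hlam_pos)
  have h2d : ((2:ℝ)*d) ^ lam = 2^lam * d^lam :=
    Real.mul_rpow (by norm_num) (le_of_lt hd0)
  have habs : |u x| = -u x := abs_of_nonpos (hu_nonpos x hxΩ)
  rw [habs]
  calc -u x ≤ K * (D / 2^k) ^ lam := hxbound
    _ ≤ K * (2^lam * d^lam) := by
        rw [← h2d]
        exact mul_le_mul_of_nonneg_left hmono (le_of_lt hK0)
    _ = 2^lam * K * d^lam := by ring
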